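/- For every x ∈ I: x belongs to F if and only if at least one of s(x−), s(x), s(x+) belongs to F̂ (with the conventions s(0−) := s(0), and s(r+) := s(r) when r ∈ I). -/

import Mathlib

open MeasureTheory Set Filter Topology
open scoped Classical

/-- The interval `[0, r)` inside `ℝ`, for `r ∈ (0, ∞]`. -/
def Ilt (r : EReal) : Set ℝ := {x : ℝ | 0 ≤ x ∧ (x : EReal) < r}

/-- `r̂ = s(r−)`, the supremum of `s` over `[0, r)`, as an extended real. -/
noncomputable def rhat (s : ℝ → ℝ) (r : EReal) : EReal :=
  sSup ((fun x : ℝ => (s x : EReal)) '' Ilt r)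

/-- `s(x−)`, the left limit of the increasing function `s` at `x` (with the
convention `s(0−) = s(0)`, i.e. `s(x−) = s(x)` when no point of `I` lies below `x`). -/
noncomputable def sminus (s : ℝ → ℝ) (I : Set ℝ) (x : ℝ) : ℝ :=
  if (I ∩ Set.Iio x).Nonempty then sSup (s '' (I ∩ Set.Iio x)) else s x

/-- `s(x+)`, the right limit of the increasing function `s` at `x` (with the
convention `s(r+) = s(r)` when `r ∈ I`, i.e. `s(x+) = s(x)` when no point of `I`
lies above `x`). -/
noncomputable def splus (s : ℝ → ℝ) (I : Set ℝ) (x : ℝ) : ℝ :=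
  if (I ∩ Set.Ioi x).Nonempty then sInf (s '' (I ∩ Set.Ioi x)) else s x

/-- `s(I)`, viewed inside `[−∞, ∞]`. -/
def sImage (s : ℝ → ℝ) (I : Set ℝ) : Set EReal := (fun x : ℝ => (s x : EReal)) '' I

/-- `Î`: the closure of `s(I)` in `[−∞,∞]` if `r ∈ I`, and this closure with the
point `r̂` removed if `r ∉ I`. -/
noncomputable def Ihat (s : ℝ → ℝ) (I : Set ℝ) (r : EReal) : Set EReal :=
  if ∃ rr : ℝ, (rr : EReal) = r ∧ rr ∈ I then closure (sImage s I)
  else closure (sImage s I) \ {rhat s r}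

/-- `F`, the topological support of `m` in `I`. -/
def Fsupp (m : Measure ℝ) (I : Set ℝ) : Set ℝ :=
  {x : ℝ | x ∈ I ∧ ∀ ε : ℝ, 0 < ε → 0 < m (Set.Ioo (x - ε) (x + ε) ∩ I)}

/-- `F̂`, the topological support of `m̂ = s_*m` in `Î`. -/
noncomputable def Fhatsupp (m : Measure ℝ) (I : Set ℝ) (s : ℝ → ℝ) (r : EReal) :
    Set ℝ :=
  {xh : ℝ | (xh : EReal) ∈ Ihat s I r ∧
    ∀ ε : ℝ, 0 < ε → 0 < Measure.map s m (Set.Ioo (xh - ε) (xh + ε))}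

/-- `Ḟ = {x ∈ F : s(x) ∈ F̂}`. -/
noncomputable def Fdot (m : Measure ℝ) (I : Set ℝ) (s : ℝ → ℝ) (r : EReal) : Set ℝ :=
  {x ∈ Fsupp m I | s x ∈ Fhatsupp m I s r}

theorem stmt11 (r : EReal) (hr : 0 < r) (I : Set ℝ)
    (hI : I = Ilt r ∨ ∃ rr : ℝ, r = (rr : EReal) ∧ I = Set.Icc 0 rr)
    (s : ℝ → ℝ) (hmono : StrictMonoOn s I) (hs0 : s 0 = 0)
    (hs0p : Filter.Tendsto s (nhdsWithin 0 (Set.Ioi 0)) (nhds 0))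
    (hslt : ∀ x ∈ Ilt r, ((s x : ℝ) : EReal) < rhat s r)
    (hsr : ∀ rr : ℝ, r = (rr : EReal) → rr ∈ I → ((s rr : ℝ) : EReal) = rhat s r)
    (hmeas : Measurable s)
    (m : Measure ℝ) (hmI : m Iᶜ = 0)
    (hfin : ∀ x ∈ I, m (Set.Icc 0 x) < ⊤)
    (hm0 : m ({0} : Set ℝ) = 0)
    (hmpos1 : ∀ x ∈ I, x ≠ 0 → 0 < m (Set.Ioc 0 x))
    (hmpos2 : ∀ c : ℝ, 0 < c → (c : EReal) < r → 0 < m {y : ℝ | c < y ∧ (y : EReal) < r}) :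
    ∀ x ∈ I, (x ∈ Fsupp m I ↔
      (sminus s I x ∈ Fhatsupp m I s r ∨ s x ∈ Fhatsupp m I s r ∨
        splus s I x ∈ Fhatsupp m I s r)) := by
  -- ---------- basic structural facts about I ----------
  have h0I : (0 : ℝ) ∈ I := by
    rcases hI with h | ⟨rr, hrr, h⟩
    · rw [h]; exact ⟨le_refl 0, by simpa using hr⟩
    · rw [h]; refine ⟨le_refl 0, ?_⟩
      rw [hrr] at hr; exact (EReal.coe_pos.mp hr).le
  have hord : ∀ ⦃a b c : ℝ⦄, a ∈ I → c ∈ I → a ≤ b → b ≤ c → b ∈ I := by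
    intro a b c ha hc hab hbc
    rcases hI with h | ⟨rr, hrr, h⟩
    · rw [h] at ha hc ⊢
      exact ⟨ha.1.trans hab, lt_of_le_of_lt (EReal.coe_le_coe_iff.mpr hbc) hc.2⟩
    · rw [h] at ha hc ⊢
      exact ⟨ha.1.trans hab, hbc.trans hc.2⟩
  have hIpos : ∀ y ∈ I, (0 : ℝ) ≤ y := by
    intro y hy
    rcases hI with h | ⟨rr, hrr, h⟩ <;> rw [h] at hy <;> exact hy.1
  -- preimage measure comparison
  have hmA : ∀ A : Set ℝ, m A ≤ m (A ∩ I) := by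
    intro A
    refine le_trans (measure_le_inter_add_diff m A I) ?_
    have h0 : m (A \ I) = 0 := measure_mono_null (fun y hy => hy.2) hmI
    simp [h0]
  -- key lemma for the reverse direction
  have keyRev : ∀ x : ℝ, ∀ yh : ℝ,
      (∀ ε : ℝ, 0 < ε → 0 < Measure.map s m (Set.Ioo (yh - ε) (yh + ε))) →
      ∀ ε : ℝ, 0 < ε →
      (∃ δ : ℝ, 0 < δ ∧ ∀ y ∈ I, yh - δ < s y → s y < yh + δ → x - ε < y ∧ y < x + ε) →
      0 < m (Set.Ioo (x - ε) (x + ε) ∩ I) := by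
    intro x yh hmass ε hε ⟨δ, hδ, hsub⟩
    have h1 := hmass δ hδ
    rw [Measure.map_apply hmeas measurableSet_Ioo] at h1
    refine lt_of_lt_of_le h1 ?_
    refine le_trans (hmA _) (measure_mono ?_)
    rintro y ⟨hy1, hy2⟩
    exact ⟨mem_Ioo.mpr (hsub y hy2 hy1.1 hy1.2), hy2⟩
  -- construct δ from two separation conditions
  have mkδ : ∀ x ∈ I, ∀ ε : ℝ, 0 < ε → ∀ yh : ℝ,
      (x - ε ∈ I → s (x - ε) < yh) → (x + ε ∈ I → yh < s (x + ε)) →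
      ∃ δ : ℝ, 0 < δ ∧ ∀ y ∈ I, yh - δ < s y → s y < yh + δ → x - ε < y ∧ y < x + ε := by
    intro x hx ε hε yh hl hr'
    refine ⟨min (if h : x - ε ∈ I then yh - s (x - ε) else 1)
      (if h : x + ε ∈ I then s (x + ε) - yh else 1), ?_, ?_⟩
    · refine lt_min ?_ ?_ <;> split <;> first
        | exact one_pos
        | (rename_i h; linarith [hl h])
        | (rename_i h; linarith [hr' h])
    · intro y hy h1 h2
      constructor
      · by_contra hcon
        push_neg at hcon
        have hxe : x - ε ∈ I := hord hy hx hcon (by linarith)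
        have h3 : s y ≤ s (x - ε) := hmono.monotoneOn hy hxe hcon
        have h4 : min (if h : x - ε ∈ I then yh - s (x - ε) else 1)
            (if h : x + ε ∈ I then s (x + ε) - yh else 1) ≤ yh - s (x - ε) := by
          refine le_trans (min_le_left _ _) ?_
          rw [dif_pos hxe]
        linarith
      · by_contra hcon
        push_neg at hcon
        have hxe : x + ε ∈ I := hord hx hy (by linarith) hcon
        have h3 : s (x + ε) ≤ s y := hmono.monotoneOn hxe hy hcon
        have h4 : min (if h : x - ε ∈ I then yh - s (x - ε) else 1)
            (if h : x + ε ∈ I then s (x + ε) - yh else 1) ≤ s (x + ε) - yh := by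
          refine le_trans (min_le_right _ _) ?_
          rw [dif_pos hxe]
        linarith
  -- membership in Ihat from closure + possible strict bound
  have mkIhat : ∀ yh : ℝ, (yh : EReal) ∈ closure (sImage s I) →
      ((yh : EReal) < rhat s r ∨ ∃ rr : ℝ, (rr : EReal) = r ∧ rr ∈ I) →
      (yh : EReal) ∈ Ihat s I r := by
    intro yh hcl halt
    unfold Ihat
    split
    · exact hcl
    · rename_i hno
      rcases halt with hlt | hex
      · exact ⟨hcl, ne_of_lt hlt⟩
      · exact absurd hex hno
  -- in the "no right endpoint" case, I = Ilt r
  have hIlt : (¬ ∃ rr : ℝ, (rr : EReal) = r ∧ rr ∈ I) → I = Ilt r := by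
    intro hno
    rcases hI with h | ⟨rr, hrr, h⟩
    · exact h
    · exfalso
      refine hno ⟨rr, hrr.symm, ?_⟩
      rw [h]
      rw [hrr] at hr
      exact ⟨(EReal.coe_pos.mp hr).le, le_refl rr⟩
  -- alternative form: for any point of I, its s-value is < rhat or the endpoint is in I
  have haltI : ∀ y ∈ I, ((s y : ℝ) : EReal) < rhat s r ∨ ∃ rr : ℝ, (rr : EReal) = r ∧ rr ∈ I := by
    intro y hy
    by_cases hex : ∃ rr : ℝ, (rr : EReal) = r ∧ rr ∈ I
    · exact Or.inr hex
    · left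
      have := hIlt hex
      rw [this] at hy
      exact hslt y hy
  -- ======================= main proof =======================
  intro x hx
  constructor
  · -- forward direction
    intro hFx
    obtain ⟨hxI, hF⟩ := hFx
    -- trichotomy
    have htri : (0 < m ({x} : Set ℝ)) ∨
        (∀ ε : ℝ, 0 < ε → 0 < m (Set.Ioo (x - ε) x ∩ I)) ∨
        (∀ ε : ℝ, 0 < ε → 0 < m (Set.Ioo x (x + ε) ∩ I)) := by
      by_contra hc
      push_neg at hc
      obtain ⟨h1, h2, h3⟩ := hc
      obtain ⟨ε1, hε1, h2'⟩ := h2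
      obtain ⟨ε2, hε2, h3'⟩ := h3
      have hmin : (0:ℝ) < min ε1 ε2 := lt_min hε1 hε2
      have hsub : Set.Ioo (x - min ε1 ε2) (x + min ε1 ε2) ∩ I ⊆
          (Set.Ioo (x - ε1) x ∩ I) ∪ (({x} : Set ℝ) ∪ (Set.Ioo x (x + ε2) ∩ I)) := by
        rintro y ⟨⟨hy1, hy2⟩, hyI⟩
        rcases lt_trichotomy y x with h | h | h
        · exact Or.inl ⟨⟨by have := min_le_left ε1 ε2; linarith, h⟩, hyI⟩
        · exact Or.inr (Or.inl h)
        · exact Or.inr (Or.inr ⟨⟨h, by have := min_le_right ε1 ε2; linarith⟩, hyI⟩)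
      have hz : m (Set.Ioo (x - min ε1 ε2) (x + min ε1 ε2) ∩ I) = 0 := by
        refine le_antisymm ?_ zero_le
        refine le_trans (measure_mono hsub) ?_
        refine le_trans (measure_union_le _ _) ?_
        rw [le_zero_iff.mp h2', zero_add]
        refine le_trans (measure_union_le _ _) ?_
        rw [le_zero_iff.mp h1, le_zero_iff.mp h3', zero_add]
      exact absurd (hF _ hmin) (by simp [hz])
    rcases htri with hatom | hL | hR
    · -- atom at x : middle disjunct
      refine Or.inr (Or.inl ⟨?_, ?_⟩)
      · exact mkIhat (s x) (subset_closure ⟨x, hx, rfl⟩) (haltI x hx)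
      · intro ε hε
        rw [Measure.map_apply hmeas measurableSet_Ioo]
        refine lt_of_lt_of_le hatom (measure_mono ?_)
        intro y hy
        rw [Set.mem_singleton_iff] at hy
        subst hy
        exact ⟨by linarith, by linarith⟩
    · -- mass from the left : sminus disjunct
      have hne : (I ∩ Set.Iio x).Nonempty := by
        obtain ⟨y, hy⟩ := nonempty_of_measure_ne_zero (hL 1 one_pos).ne'
        exact ⟨y, hy.2, hy.1.2⟩
      have hne' : (s '' (I ∩ Set.Iio x)).Nonempty := hne.image s
      have hbdd : BddAbove (s '' (I ∩ Set.Iio x)) := by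
        refine ⟨s x, ?_⟩
        rintro z ⟨y, ⟨hyI, hyx⟩, rfl⟩
        exact hmono.monotoneOn hyI hx (le_of_lt hyx)
      have hsm : sminus s I x = sSup (s '' (I ∩ Set.Iio x)) := by
        unfold sminus; rw [if_pos hne]
      have hLle : sSup (s '' (I ∩ Set.Iio x)) ≤ s x := by
        refine csSup_le hne' ?_
        rintro z ⟨y, ⟨hyI, hyx⟩, rfl⟩
        exact hmono.monotoneOn hyI hx (le_of_lt hyx)
      refine Or.inl ?_
      rw [hsm]
      refine ⟨?_, ?_⟩
      · refine mkIhat _ ?_ ?_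
        · have hclR : sSup (s '' (I ∩ Set.Iio x)) ∈ closure (s '' (I ∩ Set.Iio x)) :=
            csSup_mem_closure hne' hbdd
          refine map_mem_closure continuous_coe_real_ereal hclR ?_
          rintro z ⟨y, ⟨hyI, _⟩, rfl⟩
          exact ⟨y, hyI, rfl⟩
        · rcases haltI x hx with h | h
          · exact Or.inl (lt_of_le_of_lt (EReal.coe_le_coe_iff.mpr hLle) h)
          · exact Or.inr h
      · intro ε hε
        obtain ⟨z, hz, hzgt⟩ := exists_lt_of_lt_csSup hne'
          (show sSup (s '' (I ∩ Set.Iio x)) - ε < sSup (s '' (I ∩ Set.Iio x)) by linarith)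
        obtain ⟨y0, ⟨hy0I, hy0x⟩, rfl⟩ := hz
        rw [Measure.map_apply hmeas measurableSet_Ioo]
        refine lt_of_lt_of_le (b := m (Set.Ioo y0 x ∩ I)) ?_ (measure_mono ?_)
        · have := hL (x - y0) (by simp only [Set.mem_Iio] at hy0x; linarith)
          rwa [sub_sub_cancel] at this
        · rintro y ⟨⟨hy1, hy2⟩, hyI⟩
          have h5 : s y0 < s y := hmono hy0I hyI hy1
          have h6 : s y ≤ sSup (s '' (I ∩ Set.Iio x)) :=
            le_csSup hbdd ⟨y, ⟨hyI, hy2⟩, rfl⟩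
          exact ⟨by linarith, by linarith⟩
    · -- mass from the right : splus disjunct
      have hne : (I ∩ Set.Ioi x).Nonempty := by
        obtain ⟨y, hy⟩ := nonempty_of_measure_ne_zero (hR 1 one_pos).ne'
        exact ⟨y, hy.2, hy.1.1⟩
      have hne' : (s '' (I ∩ Set.Ioi x)).Nonempty := hne.image s
      have hbdd : BddBelow (s '' (I ∩ Set.Ioi x)) := by
        refine ⟨s x, ?_⟩
        rintro z ⟨y, ⟨hyI, hyx⟩, rfl⟩
        exact hmono.monotoneOn hx hyI (le_of_lt hyx)
      have hsp : splus s I x = sInf (s '' (I ∩ Set.Ioi x)) := by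
        unfold splus; rw [if_pos hne]
      obtain ⟨y1, hy1I, hy1x⟩ := hne
      have hRle : sInf (s '' (I ∩ Set.Ioi x)) ≤ s y1 := csInf_le hbdd ⟨y1, ⟨hy1I, hy1x⟩, rfl⟩
      refine Or.inr (Or.inr ?_)
      rw [hsp]
      refine ⟨?_, ?_⟩
      · refine mkIhat _ ?_ ?_
        · have hclR : sInf (s '' (I ∩ Set.Ioi x)) ∈ closure (s '' (I ∩ Set.Ioi x)) :=
            csInf_mem_closure hne' hbdd
          refine map_mem_closure continuous_coe_real_ereal hclR ?_
          rintro z ⟨y, ⟨hyI, _⟩, rfl⟩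
          exact ⟨y, hyI, rfl⟩
        · rcases haltI y1 hy1I with h | h
          · exact Or.inl (lt_of_le_of_lt (EReal.coe_le_coe_iff.mpr hRle) h)
          · exact Or.inr h
      · intro ε hε
        obtain ⟨z, hz, hzlt⟩ := exists_lt_of_csInf_lt hne'
          (show sInf (s '' (I ∩ Set.Ioi x)) < sInf (s '' (I ∩ Set.Ioi x)) + ε by linarith)
        obtain ⟨y0, ⟨hy0I, hy0x⟩, rfl⟩ := hz
        rw [Measure.map_apply hmeas measurableSet_Ioo]
        refine lt_of_lt_of_le (b := m (Set.Ioo x y0 ∩ I)) ?_ (measure_mono ?_)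
        · have := hR (y0 - x) (by simp only [Set.mem_Ioi] at hy0x; linarith)
          rwa [add_sub_cancel] at this
        · rintro y ⟨⟨hy1, hy2⟩, hyI⟩
          have h5 : s y < s y0 := hmono hyI hy0I hy2
          have h6 : sInf (s '' (I ∩ Set.Ioi x)) ≤ s y :=
            csInf_le hbdd ⟨y, ⟨hyI, hy1⟩, rfl⟩
          exact ⟨by linarith, by linarith⟩
  · -- reverse direction
    intro h
    refine ⟨hx, ?_⟩
    intro ε hε
    have hmid : (∀ ε' : ℝ, 0 < ε' → 0 < Measure.map s m (Set.Ioo (s x - ε') (s x + ε'))) →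
        0 < m (Set.Ioo (x - ε) (x + ε) ∩ I) := by
      intro hmass
      refine keyRev x (s x) hmass ε hε (mkδ x hx ε hε (s x) ?_ ?_)
      · intro h'; exact hmono h' hx (by linarith)
      · intro h'; exact hmono hx h' (by linarith)
    rcases h with h | h | h
    · by_cases hne : (I ∩ Set.Iio x).Nonempty
      · have hsm : sminus s I x = sSup (s '' (I ∩ Set.Iio x)) := by
          unfold sminus; rw [if_pos hne]
        have hne' : (s '' (I ∩ Set.Iio x)).Nonempty := hne.image s
        have hbdd : BddAbove (s '' (I ∩ Set.Iio x)) := by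
          refine ⟨s x, ?_⟩
          rintro z ⟨y, ⟨hyI, hyx⟩, rfl⟩
          exact hmono.monotoneOn hyI hx (le_of_lt hyx)
        have hLle : sSup (s '' (I ∩ Set.Iio x)) ≤ s x := by
          refine csSup_le hne' ?_
          rintro z ⟨y, ⟨hyI, hyx⟩, rfl⟩
          exact hmono.monotoneOn hyI hx (le_of_lt hyx)
        rw [hsm] at h
        refine keyRev x _ h.2 ε hε (mkδ x hx ε hε _ ?_ ?_)
        · intro h'
          have hmidpt : x - ε / 2 ∈ I := hord h' hx (by linarith) (by linarith)
          have h7 : s (x - ε / 2) ≤ sSup (s '' (I ∩ Set.Iio x)) :=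
            le_csSup hbdd ⟨x - ε / 2, ⟨hmidpt, by simp [Set.mem_Iio]; linarith⟩, rfl⟩
          have h8 : s (x - ε) < s (x - ε / 2) := hmono h' hmidpt (by linarith)
          linarith
        · intro h'
          have h8 : s x < s (x + ε) := hmono hx h' (by linarith)
          linarith
      · have hsm : sminus s I x = s x := by
          unfold sminus; rw [if_neg hne]
        rw [hsm] at h
        exact hmid h.2
    · exact hmid h.2
    · by_cases hne : (I ∩ Set.Ioi x).Nonempty
      · have hsp : splus s I x = sInf (s '' (I ∩ Set.Ioi x)) := by
          unfold splus; rw [if_pos hne]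
        have hne' : (s '' (I ∩ Set.Ioi x)).Nonempty := hne.image s
        have hbdd : BddBelow (s '' (I ∩ Set.Ioi x)) := by
          refine ⟨s x, ?_⟩
          rintro z ⟨y, ⟨hyI, hyx⟩, rfl⟩
          exact hmono.monotoneOn hx hyI (le_of_lt hyx)
        have hRge : s x ≤ sInf (s '' (I ∩ Set.Ioi x)) := by
          refine le_csInf hne' ?_
          rintro z ⟨y, ⟨hyI, hyx⟩, rfl⟩
          exact hmono.monotoneOn hx hyI (le_of_lt hyx)
        rw [hsp] at h
        refine keyRev x _ h.2 ε hε (mkδ x hx ε hε _ ?_ ?_)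
        · intro h'
          have h8 : s (x - ε) < s x := hmono h' hx (by linarith)
          linarith
        · intro h'
          have hmidpt : x + ε / 2 ∈ I := hord hx h' (by linarith) (by linarith)
          have h7 : sInf (s '' (I ∩ Set.Ioi x)) ≤ s (x + ε / 2) :=
            csInf_le hbdd ⟨x + ε / 2, ⟨hmidpt, by simp [Set.mem_Ioi]; linarith⟩, rfl⟩
          have h8 : s (x + ε / 2) < s (x + ε) := hmono hmidpt h' (by linarith)
          linarith
      · have hsp : splus s I x = s x := by
          unfold splus; rw [if_neg hne]
        rw [hsp] at h
        exact hmid h.2
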